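/- arXiv:0902.4161 — 3 statements merged into one kernel-verified Lean document; each statement's English description precedes it below -/
import Mathlib

section
/- Let p be a prime, A an abelian group, and σ : A → A an additive endomorphism with (σ - id)² = 0. Suppose x ∈ A is a torsion element whose order is coprime to p, and suppose σ^(p^k)(x) = x for some k ≥ 0. Then σ(x) = x. -/
theorem stmt_1 (p : ℕ) (hp : p.Prime) (A : Type*) [AddCommGroup A]
    (σ : A →+ A) (hσ : ∀ x : A, σ (σ x) - 2 • σ x + x = 0)
    (x : A) (hx : IsOfFinAddOrder x) (hcop : Nat.Coprime (addOrderOf x) p)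
    (k : ℕ) (hfix : (⇑σ)^[p ^ k] x = x) :
    σ x = x := by
  set y := σ x - x with hy
  have hσy : σ y = y := by
    have h := hσ x
    simp only [hy, map_sub]
    have h2 : σ (σ x) = 2 • σ x - x := by
      have := hσ x
      abel_nf
      abel_nf at this
      linear_combination (norm := abel) this
    rw [h2]; abel
  have hiter : ∀ m : ℕ, (⇑σ)^[m] x = x + m • y := by
    intro m
    induction m with
    | zero => simp
    | succ m ih =>
      rw [Function.iterate_succ_apply', ih]
      have hmy : σ (m • y) = m • y := by
        rw [map_nsmul, hσy]
      rw [map_add, hmy]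
      have : σ x = x + y := by rw [hy]; abel
      rw [this]
      rw [succ_nsmul]
      abel
  have hpk : (p ^ k) • y = 0 := by
    have := hiter (p ^ k)
    rw [hfix] at this
    exact (left_eq_add.mp this)
  have hn : (addOrderOf x) • y = 0 := by
    have hx0 : (addOrderOf x) • x = 0 := addOrderOf_nsmul_eq_zero x
    have hσx0 : (addOrderOf x) • σ x = 0 := by
      rw [← map_nsmul, hx0, map_zero]
    rw [hy, smul_sub, hx0, hσx0, sub_zero]
  have hdvd1 : addOrderOf y ∣ addOrderOf x := addOrderOf_dvd_of_nsmul_eq_zero hn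
  have hdvd2 : addOrderOf y ∣ p ^ k := addOrderOf_dvd_of_nsmul_eq_zero hpk
  have hcop' : Nat.Coprime (addOrderOf x) (p ^ k) := hcop.pow_right k
  have h1 : addOrderOf y = 1 :=
    (Nat.coprime_self _).mp ((Nat.Coprime.coprime_dvd_left hdvd1 hcop').coprime_dvd_right hdvd2)
  have hy0 : y = 0 := by have := addOrderOf_nsmul_eq_zero y; rwa [h1, one_nsmul] at this
  have : σ x - x = 0 := hy ▸ hy0
  exact sub_eq_zero.mp this
end

section
/- Let p be a prime, r ≥ 1, s ≥ 1, and let M be an s × s matrix with coefficients in ℤ/p^r ℤ. If p is odd, then (Id + p·M)^(p^(r-1)) = Id in the matrix ring over ℤ/p^r ℤ. -/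
lemma key_dvd (p : ℕ) (hp : p.Prime) (n k : ℕ) (hk : k ≠ 0) (hkn : k ≤ p ^ n) :
    p ^ (n + 1) ∣ p ^ k * (p ^ n).choose k := by
  set v := multiplicity p k with hv
  have hchoose : (p : ℕ) ^ (n - v) ∣ (p ^ n).choose k := by
    apply pow_dvd_of_le_emultiplicity
    rw [hp.emultiplicity_choose_prime_pow hkn hk]
  have hvk : v < k := by
    have h1 : p ^ v ∣ k := pow_multiplicity_dvd p k
    have h2 : p ^ v ≤ k := Nat.le_of_dvd (Nat.pos_of_ne_zero hk) h1
    exact lt_of_lt_of_le (Nat.lt_pow_self hp.one_lt) h2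
  calc p ^ (n + 1) ∣ p ^ (k + (n - v)) := by
        apply pow_dvd_pow
        omega
    _ = p ^ k * p ^ (n - v) := pow_add p k (n - v)
    _ ∣ p ^ k * (p ^ n).choose k := mul_dvd_mul_left _ hchoose

theorem stmt_3 (p : ℕ) (hp : p.Prime) (hodd : p ≠ 2) (r s : ℕ) (hr : 1 ≤ r) (hs : 1 ≤ s)
    (M : Matrix (Fin s) (Fin s) (ZMod (p ^ r))) :
    (1 + (p : ZMod (p ^ r)) • M) ^ (p ^ (r - 1)) = 1 := by
  set n := p ^ (r - 1) with hn
  have hcomm : Commute ((p : ZMod (p ^ r)) • M) (1 : Matrix (Fin s) (Fin s) (ZMod (p ^ r))) :=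
    Commute.one_right _
  rw [add_comm, hcomm.add_pow]
  rw [Finset.sum_eq_single 0]
  · simp
  · intro k hk hk0
    have hkn : k ≤ n := Nat.lt_succ_iff.mp (Finset.mem_range.mp hk)
    have hscalar : ((p : ZMod (p ^ r)) ^ k) * ((n.choose k : ℕ) : ZMod (p ^ r)) = 0 := by
      have : (((p ^ k * n.choose k : ℕ)) : ZMod (p ^ r)) = 0 := by
        rw [ZMod.natCast_eq_zero_iff]
        have := key_dvd p hp (r - 1) k hk0 (by simpa [hn] using hkn)
        have hr' : r - 1 + 1 = r := Nat.succ_pred_eq_of_pos hr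
        rwa [hr', ← hn] at this
      push_cast at this
      exact this
    rw [smul_pow, one_pow, mul_one]
    have hcast : ((n.choose k : ℕ) : Matrix (Fin s) (Fin s) (ZMod (p ^ r)))
        = ((n.choose k : ℕ) : ZMod (p ^ r)) • 1 := by
      simp [Nat.cast_smul_eq_nsmul]
    rw [hcast, mul_smul_comm, mul_one, smul_smul, mul_comm, hscalar, zero_smul]
  · intro h; simp at h
end

section
/- Let A be an abelian group, C ⊆ A a subset, and ι : C → C an involution. Suppose that whenever a₁, a₂, b₁, b₂ ∈ C satisfy b₁ + a₂ = a₁ + b₂ in A, then either ({b₁, a₂} = {a₁, b₂} as unordered pairs with b₁ = b₂, a₁ = a₂ or b₁ = a₁, b₂ = a₂) or (a₂ = ι(b₁) and b₂ = ι(a₁)). Then for every x ∈ A with x ≠ 0, the set {c ∈ C : c + x ∈ C} has at most two elements. -/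
theorem stmt_9 (A : Type*) [AddCommGroup A] (C : Set A)
    (ι : A → A) (hιC : ∀ c ∈ C, ι c ∈ C) (hinv : ∀ c ∈ C, ι (ι c) = c)
    (hrigid : ∀ a₁ ∈ C, ∀ a₂ ∈ C, ∀ b₁ ∈ C, ∀ b₂ ∈ C,
      b₁ + a₂ = a₁ + b₂ →
        ((b₁ = b₂ ∧ a₁ = a₂) ∨ (b₁ = a₁ ∧ b₂ = a₂)) ∨ (a₂ = ι b₁ ∧ b₂ = ι a₁)) :
    ∀ x : A, x ≠ 0 → {c ∈ C | c + x ∈ C}.encard ≤ 2 := by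
  intro x hx
  set S := {c ∈ C | c + x ∈ C} with hS
  have key : ∀ c ∈ S, ∀ d ∈ S, c ≠ d → d = ι (c + x) := by
    intro c hc d hd hcd
    obtain ⟨hc1, hc2⟩ := hc
    obtain ⟨hd1, hd2⟩ := hd
    have heq : (c + x) + d = c + (d + x) := by abel
    rcases hrigid c hc1 d hd1 (c + x) hc2 (d + x) hd2 heq with (⟨h1, h2⟩ | ⟨h1, h2⟩) | ⟨h1, h2⟩
    · exact absurd h2 hcd
    · exact absurd (by rwa [add_eq_left] at h1 : x = 0) hx
    · exact h1
  rcases Set.eq_empty_or_nonempty S with h | ⟨c, hc⟩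
  · simp [h]
  rcases em (∃ d ∈ S, d ≠ c) with ⟨d, hd, hdc⟩ | h
  · have hsub : S ⊆ {c, d} := by
      intro e he
      rcases em (e = c) with h | h
      · exact Or.inl h
      · right
        rw [key c hc e he (fun hh => h hh.symm), ← key c hc d hd (fun hh => hdc hh.symm)]
        exact rfl
    calc S.encard ≤ ({c, d} : Set A).encard := Set.encard_le_encard hsub
      _ ≤ 2 := (Set.encard_insert_le _ _).trans (by rw [Set.encard_singleton]; rfl)
  · have hsub : S ⊆ {c} := fun e he => by
      push_neg at h; exact h e he
    calc S.encard ≤ ({c} : Set A).encard := Set.encard_le_encard hsub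
      _ ≤ 2 := by simp
end
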